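/- Consider the sequence of pairs a(t) = φ(t·u), b(t) = φ(t·u + v) under the vanilla projection φ in ℝ² (n=1), where u = 1 and v > 0 is fixed: a(t) = (√(t² + β), t), b(t) = (√((t+v)² + β), t+v). Then the Lorentz distance d_Lo(a(t), b(t)) tends to 0 as t → ∞, even though the Euclidean distance between the preimages is constantly v. -/

import Mathlib

set_option maxHeartbeats 1000000

theorem vanilla_proj_distance_degenerates {β v : ℝ} (hβ : 0 < β) (hv : 0 < v) :
    Filter.Tendsto
      (fun t : ℝ =>
        |(-(Real.sqrt (t^2 + β) * Real.sqrt ((t + v)^2 + β)) + t * (t + v))| - β)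
      Filter.atTop (nhds 0) ∧
    ∀ t : ℝ, |(t + v) - t| = v := by
  constructor
  · set F : ℝ → ℝ := fun t => Real.sqrt (t^2+β) * Real.sqrt ((t+v)^2+β) - t*(t+v) with hFdef
    have habs : ∀ t : ℝ,
        |(-(Real.sqrt (t^2 + β) * Real.sqrt ((t + v)^2 + β)) + t * (t + v))| = F t := by
      intro t
      have h1 : (0:ℝ) ≤ t^2 + β := by positivity
      have hs : Real.sqrt (t^2+β) * Real.sqrt ((t+v)^2+β)
          = Real.sqrt ((t^2+β)*((t+v)^2+β)) := (Real.sqrt_mul h1 _).symm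
      have hle : t*(t+v) ≤ Real.sqrt ((t^2+β)*((t+v)^2+β)) := by
        have hsq : (t*(t+v))^2 ≤ (t^2+β)*((t+v)^2+β) := by nlinarith [sq_nonneg t, sq_nonneg (t+v), sq_nonneg β]
        calc t*(t+v) ≤ |t*(t+v)| := le_abs_self _
          _ = Real.sqrt ((t*(t+v))^2) := (Real.sqrt_sq_eq_abs _).symm
          _ ≤ _ := Real.sqrt_le_sqrt hsq
      rw [hs, abs_of_nonpos (by linarith)]
      show _ = Real.sqrt (t^2+β) * Real.sqrt ((t+v)^2+β) - t*(t+v)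
      rw [hs]; ring
    set G : ℝ → ℝ := fun s =>
      (β*(1+(1+v*s)^2) + β^2*s^2) /
        (Real.sqrt ((1+β*s^2)*((1+v*s)^2+β*s^2)) + (1+v*s)) with hGdef
    have hkey : ∀ t : ℝ, 0 < t → F t = G t⁻¹ := by
      intro t ht
      set s := t⁻¹ with hsdef
      have hst : s * t = 1 := inv_mul_cancel₀ ht.ne'
      have hs0 : 0 < s := inv_pos.mpr ht
      have h1 : (0:ℝ) ≤ t^2 + β := by positivity
      have h2 : (0:ℝ) ≤ (t+v)^2 + β := by positivity
      have e1 : 1 + β*s^2 = s^2*(t^2+β) := by linear_combination (-(s*t+1))*hst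
      have e2 : (1+v*s)^2 + β*s^2 = s^2*((t+v)^2+β) := by linear_combination (-(1+2*v*s+s*t))*hst
      have e3 : Real.sqrt ((1+β*s^2)*((1+v*s)^2+β*s^2))
          = s^2 * (Real.sqrt (t^2+β) * Real.sqrt ((t+v)^2+β)) := by
        rw [e1, e2]
        rw [show s^2*(t^2+β) * (s^2*((t+v)^2+β)) = (s^2*s^2) * ((t^2+β)*((t+v)^2+β)) by ring]
        rw [Real.sqrt_mul (by positivity), Real.sqrt_mul h1]
        rw [show s^2*s^2 = (s^2)^2 by ring, Real.sqrt_sq (by positivity)]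
      set A := Real.sqrt (t^2+β) with hA
      set B := Real.sqrt ((t+v)^2+β) with hB
      have hA0 : 0 ≤ A := Real.sqrt_nonneg _
      have hB0 : 0 ≤ B := Real.sqrt_nonneg _
      have hAt : t ≤ A := by
        rw [hA]
        calc t ≤ |t| := le_abs_self t
          _ = Real.sqrt (t^2) := (Real.sqrt_sq_eq_abs t).symm
          _ ≤ _ := Real.sqrt_le_sqrt (by linarith)
      have hApos : 0 < A := lt_of_lt_of_le ht hAt
      have hBt : t + v ≤ B := by
        rw [hB]
        calc t+v ≤ |t+v| := le_abs_self _
          _ = Real.sqrt ((t+v)^2) := (Real.sqrt_sq_eq_abs _).symm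
          _ ≤ _ := Real.sqrt_le_sqrt (by linarith)
      have hD : 0 < A*B + t*(t+v) := by nlinarith
      have hA2 : A^2 = t^2+β := Real.sq_sqrt h1
      have hB2 : B^2 = (t+v)^2+β := Real.sq_sqrt h2
      have hFD : F t * (A*B + t*(t+v)) = β*t^2 + β*(t+v)^2 + β^2 := by
        show (A*B - t*(t+v)) * (A*B + t*(t+v)) = _
        have : (A*B - t*(t+v)) * (A*B + t*(t+v)) = A^2*B^2 - (t*(t+v))^2 := by ring
        rw [this, hA2, hB2]; ring
      have hFeq : F t = (β*t^2 + β*(t+v)^2 + β^2) / (A*B + t*(t+v)) :=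
        (eq_div_iff hD.ne').mpr hFD
      rw [hFeq, hGdef]
      show _ = (β*(1+(1+v*s)^2) + β^2*s^2) /
        (Real.sqrt ((1+β*s^2)*((1+v*s)^2+β*s^2)) + (1+v*s))
      rw [e3]
      have n1 : β*(1+(1+v*s)^2) + β^2*s^2 = s^2 * (β*t^2 + β*(t+v)^2 + β^2) := by
        linear_combination (-β*(2+2*v*s+2*s*t))*hst
      have n2 : s^2 * (A*B) + (1+v*s) = s^2 * (A*B + t*(t+v)) := by
        linear_combination (-(1+s*t+v*s))*hst
      rw [n1, n2, mul_div_mul_left _ _ (by positivity : (s:ℝ)^2 ≠ 0)]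
    have hGcont : ContinuousAt G 0 := by
      apply ContinuousAt.div
      · fun_prop
      · apply ContinuousAt.add _ (by fun_prop)
        exact (Real.continuous_sqrt.comp (by continuity)).continuousAt
      · norm_num
    have hG0 : G 0 = β := by
      simp [hGdef, Real.sqrt_one]
    have hGtend : Filter.Tendsto G (nhdsWithin 0 (Set.Ioi 0)) (nhds β) := by
      rw [← hG0]
      exact hGcont.continuousWithinAt.tendsto
    have hinv : Filter.Tendsto (fun t : ℝ => t⁻¹) Filter.atTop (nhdsWithin 0 (Set.Ioi 0)) :=
      tendsto_inv_atTop_nhdsGT_zero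
    have hFtend : Filter.Tendsto F Filter.atTop (nhds β) := by
      apply (hGtend.comp hinv).congr'
      filter_upwards [Filter.eventually_gt_atTop 0] with t ht
      exact (hkey t ht).symm
    have : Filter.Tendsto (fun t => F t - β) Filter.atTop (nhds 0) := by
      simpa using hFtend.sub_const β
    exact this.congr (fun t => by rw [habs t])
  · intro t
    simp [abs_of_pos hv]
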